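/- Let A : Fin (n+1) → ℤ be an array indexed 0..n (with A 0 arbitrary/ignored, entries used at indices 1..n), and define the Fenwick array F by F i = sum of A k for k in the range (i - 2^(rmb i), i] (i.e., i - 2^(rmb i) < k ≤ i), for each 1 ≤ i ≤ n. Then for every 1 ≤ i ≤ n, summing F over the nonzero elements of the sum sequence of i yields the prefix sum: F (s 0) + F (s 1) + ... + F (s (r-1)) = A 1 + A 2 + ... + A i, where s 0 = i, s (j+1) = s j - 2^(rmb (s j)), and r = popcount i. -/

import Mathlib

/-- Position of the least significant set bit of a positive natural. -/
def rmb (i : ℕ) : ℕ := padicValNat 2 i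

/-- Number of 1-bits in the binary representation. -/
def popcount (i : ℕ) : ℕ := (Nat.bits i).count true

/-- One step of the sum sequence: clear the lowest set bit. -/
def sumStep (x : ℕ) : ℕ := x - 2 ^ rmb x

/-- The sum sequence of `i`. -/
def sumSeq (i j : ℕ) : ℕ := sumStep^[j] i

/-- One step of the update sequence. -/
def updStep (x : ℕ) : ℕ := x + 2 ^ rmb x

/-- The update sequence of `i`. -/
def updSeq (i j : ℕ) : ℕ := updStep^[j] i

/-- The Fenwick array of `A`: entry `k` sums `A` over `(k - 2^(rmb k), k]`. -/
def fenwick (A : ℕ → ℤ) (k : ℕ) : ℤ := ∑ m ∈ Finset.Ioc (k - 2 ^ rmb k) k, A m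

lemma pow_rmb_le (i : ℕ) (h : 1 ≤ i) : 2 ^ rmb i ≤ i :=
  Nat.le_of_dvd h (pow_padicValNat_dvd)

lemma sumStep_lt (i : ℕ) (h : 1 ≤ i) : sumStep i < i := by
  have := pow_rmb_le i h
  have : 0 < 2 ^ rmb i := Nat.pow_pos (by norm_num)
  unfold sumStep; omega

lemma rmb_odd (k : ℕ) : rmb (2 * k + 1) = 0 :=
  padicValNat.eq_zero_of_not_dvd (by omega)

lemma rmb_even (k : ℕ) (h : k ≠ 0) : rmb (2 * k) = 1 + rmb k := by
  unfold rmb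
  rw [padicValNat.mul (by norm_num) h, padicValNat.self (by norm_num)]

lemma popcount_two_mul (k : ℕ) : popcount (2 * k) = popcount k := by
  rcases Nat.eq_zero_or_pos k with rfl | hk
  · simp
  · unfold popcount
    rw [Nat.bit0_bits k (by omega)]
    simp

lemma popcount_odd (k : ℕ) : popcount (2 * k + 1) = popcount k + 1 := by
  unfold popcount
  rw [Nat.bit1_bits k]
  simp

lemma popcount_sumStep (i : ℕ) (h : 1 ≤ i) :
    popcount (sumStep i) + 1 = popcount i := by
  induction i using Nat.strong_induction_on with
  | _ i ih =>
    rcases Nat.even_or_odd i with ⟨k, hk⟩ | ⟨k, hk⟩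
    · replace hk : i = 2 * k := by omega
      subst hk
      have hk1 : 1 ≤ k := by omega
      have hstep : sumStep (2 * k) = 2 * sumStep k := by
        unfold sumStep
        rw [rmb_even k (by omega), pow_add, pow_one]
        have := pow_rmb_le k hk1
        omega
      rw [hstep, popcount_two_mul, popcount_two_mul]
      exact ih k (by omega) hk1
    · subst hk
      have hstep : sumStep (2 * k + 1) = 2 * k := by
        unfold sumStep; rw [rmb_odd]; omega
      rw [hstep, popcount_two_mul, popcount_odd]

lemma popcount_pos (i : ℕ) (h : 1 ≤ i) : 1 ≤ popcount i := by
  induction i using Nat.strong_induction_on with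
  | _ i ih =>
    rcases Nat.even_or_odd i with ⟨k, hk⟩ | ⟨k, hk⟩
    · replace hk : i = 2 * k := by omega
      subst hk
      rw [popcount_two_mul]
      exact ih k (by omega) (by omega)
    · subst hk
      rw [popcount_odd]
      omega

theorem fenwick_sum_correct (n : ℕ) (A : ℕ → ℤ) (i : ℕ) (h1 : 1 ≤ i) (h2 : i ≤ n) :
    ∑ j ∈ Finset.range (popcount i), fenwick A (sumSeq i j) = ∑ k ∈ Finset.Icc 1 i, A k := by
  clear h2
  induction i using Nat.strong_induction_on with
  | _ i ih =>
    have hp := popcount_sumStep i h1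
    have hlt := sumStep_lt i h1
    have hIcc : (Finset.Icc 1 i) = Finset.Ioc 0 i := by
      ext x; simp [Nat.lt_iff_add_one_le]
    rw [hIcc]
    obtain ⟨r, hr⟩ : ∃ r, popcount i = r + 1 := ⟨popcount (sumStep i), hp.symm⟩
    rw [hr, Finset.sum_range_succ']
    have hseq0 : sumSeq i 0 = i := rfl
    have hseqs : ∀ j, sumSeq i (j + 1) = sumSeq (sumStep i) j := fun j => by
      unfold sumSeq; rw [Function.iterate_succ_apply]
    simp only [hseqs, hseq0]
    have hfen : fenwick A i = ∑ m ∈ Finset.Ioc (sumStep i) i, A m := rfl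
    rw [hfen]
    rcases Nat.eq_zero_or_pos (sumStep i) with h0 | h0
    · have hz : popcount (sumStep i) = 0 := by rw [h0]; simp [popcount]
      have : r = 0 := by omega
      subst this
      simp [h0]
    · have hr' : r = popcount (sumStep i) := by omega
      rw [hr', ih (sumStep i) hlt h0,
        show (Finset.Icc 1 (sumStep i)) = Finset.Ioc 0 (sumStep i) from by
          ext x; simp [Nat.lt_iff_add_one_le]]
      exact Finset.sum_Ioc_consecutive _ (by omega) (by omega)
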